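/- Let Y be a nondegenerate random variable and X a random vector with ν(Y,X) = 1, where ν(Y,X) = ∫ Var(E[1{Y>t}|X])/Var(1{Y>t}) dμ̃(t). Then there exists a measurable function f with Y = f(X) almost surely. -/

import Mathlib

open MeasureTheory ProbabilityTheory Classical

noncomputable section

/-- The indicator of the event `{Y > t}`. -/
def indGT {Ω : Type*} (Y : Ω → ℝ) (t : ℝ) : Ω → ℝ := fun ω => if Y ω > t then 1 else 0

/-- The (topological) support of a measure on `ℝ`: points all of whose neighbourhoods
have positive measure. -/
def msupport (ρ : Measure ℝ) : Set ℝ :=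
  {x | ∀ ε > (0 : ℝ), ρ (Set.Ioo (x - ε) (x + ε)) ≠ 0}

/-- `S̃`: the support with its maximum removed, if the support attains a maximum. -/
def tildeSet (ρ : Measure ℝ) : Set ℝ :=
  if h : ∃ m, IsGreatest (msupport ρ) m then msupport ρ \ {h.choose} else msupport ρ

/-- `μ̃`: the law `ρ` restricted to `S̃` and renormalized. -/
def tildeMeasure (ρ : Measure ℝ) : Measure ℝ :=
  (ρ (tildeSet ρ))⁻¹ • ρ.restrict (tildeSet ρ)

/-- The dependence measure
`ν(Y, X) = ∫ Var(E[1{Y > t} | X]) / Var(1{Y > t}) dμ̃(t)`,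
where the integrand is defined to be `1` whenever `Var(1{Y > t}) = 0`. -/
def nu {Ω : Type*} [MeasurableSpace Ω] (μ : Measure Ω) (Y : Ω → ℝ)
    {E : Type*} [MeasurableSpace E] (X : Ω → E) : ℝ :=
  ∫ t, (if variance (indGT Y t) μ = 0 then 1
        else variance (μ[indGT Y t | MeasurableSpace.comap X inferInstance]) μ
              / variance (indGT Y t) μ)
    ∂ tildeMeasure (Measure.map Y μ)

end

noncomputable section

section Aux
variable {Ω : Type*} {m m0 : MeasurableSpace Ω} {μ : Measure Ω} [IsProbabilityMeasure μ]

/-- Key L²-projection lemma for conditional expectation of a [0,1]-valued function. -/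
lemma var_condexp_le (hm : m ≤ m0) {φ : Ω → ℝ} (hφm : Measurable φ)
    (h0 : ∀ ω, 0 ≤ φ ω) (h1 : ∀ ω, φ ω ≤ 1) :
    variance (μ[φ|m]) μ ≤ variance φ μ ∧
      (variance (μ[φ|m]) μ = variance φ μ → φ =ᵐ[μ] μ[φ|m]) := by
  have hφb : ∀ᵐ ω ∂μ, ‖φ ω‖ ≤ 1 := ae_of_all _ fun ω => by
    rw [Real.norm_eq_abs, abs_le]; exact ⟨by linarith [h0 ω], h1 ω⟩
  have hφ2 : MemLp φ 2 μ := MemLp.of_bound hφm.aestronglyMeasurable 1 hφb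
  have hφint : Integrable φ μ := hφ2.integrable (by norm_num)
  set g : Ω → ℝ := μ[φ|m] with hg
  have hgsm : StronglyMeasurable[m] g := stronglyMeasurable_condExp
  have hgint : Integrable g μ := integrable_condExp
  have hg0 : 0 ≤ᵐ[μ] g := condExp_nonneg (ae_of_all _ h0)
  have hg1 : g ≤ᵐ[μ] fun _ => (1:ℝ) := by
    have := condExp_mono (μ := μ) (m := m) hφint (integrable_const 1)
      (ae_of_all _ fun ω => h1 ω)
    refine this.trans ?_
    rw [condExp_const (μ := μ) hm (1:ℝ)]
  have hgb : ∀ᵐ ω ∂μ, ‖g ω‖ ≤ 1 := by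
    filter_upwards [hg0, hg1] with ω w0 w1
    rw [Real.norm_eq_abs, abs_le]
    have w0' : (0:ℝ) ≤ g ω := w0
    exact ⟨by linarith, w1⟩
  have hg2 : MemLp g 2 μ := MemLp.of_bound hgint.aestronglyMeasurable 1 hgb
  have hpull : μ[g * φ|m] =ᵐ[μ] g * μ[φ|m] :=
    condExp_stronglyMeasurable_mul_of_bound hm hgsm hφint 1 hgb
  have hmulint : Integrable (fun ω => g ω * φ ω) μ :=
    Integrable.bdd_mul hφint hgint.aestronglyMeasurable hgb
  have hIgφ : ∫ ω, g ω * φ ω ∂μ = ∫ ω, g ω * g ω ∂μ := by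
    have h1' : ∫ ω, (g * φ) ω ∂μ = ∫ ω, (μ[g * φ|m]) ω ∂μ := (integral_condExp hm).symm
    have h2' : ∫ ω, (μ[g * φ|m]) ω ∂μ = ∫ ω, (g * μ[φ|m]) ω ∂μ := integral_congr_ae hpull
    simpa using h1'.trans h2'
  have hmean : ∫ ω, g ω ∂μ = ∫ ω, φ ω ∂μ := integral_condExp hm
  have Iφ2 : Integrable (fun ω => φ ω ^ 2) μ := hφ2.integrable_sq
  have Ig2 : Integrable (fun ω => g ω ^ 2) μ := hg2.integrable_sq
  have hsq : ∫ ω, (φ ω - g ω) ^ 2 ∂μ = ∫ ω, φ ω ^ 2 ∂μ - ∫ ω, g ω ^ 2 ∂μ := by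
    have hpt : (fun ω => (φ ω - g ω) ^ 2)
        = fun ω => (φ ω ^ 2 - 2 * (g ω * φ ω)) + g ω ^ 2 := by
      funext ω; ring
    have IA : Integrable (fun ω => φ ω ^ 2 - 2 * (g ω * φ ω)) μ := by
      exact Iφ2.sub (hmulint.const_mul 2)
    have IB : Integrable (fun ω => 2 * (g ω * φ ω)) μ := hmulint.const_mul 2
    rw [hpt]
    rw [integral_add IA Ig2, integral_sub Iφ2 IB, integral_const_mul, hIgφ]
    have : ∫ ω, g ω * g ω ∂μ = ∫ ω, g ω ^ 2 ∂μ := by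
      congr 1; funext ω; ring
    rw [this]; ring
  have hvφ : variance φ μ = ∫ ω, φ ω ^ 2 ∂μ - (∫ ω, φ ω ∂μ) ^ 2 := by
    rw [variance_eq_sub hφ2]; simp [Pi.pow_apply]
  have hvg : variance g μ = ∫ ω, g ω ^ 2 ∂μ - (∫ ω, g ω ∂μ) ^ 2 := by
    rw [variance_eq_sub hg2]; simp [Pi.pow_apply]
  have hvar : variance φ μ - variance g μ = ∫ ω, (φ ω - g ω) ^ 2 ∂μ := by
    rw [hvφ, hvg, hsq, hmean]; ring
  have hnn : 0 ≤ ∫ ω, (φ ω - g ω) ^ 2 ∂μ := integral_nonneg fun ω => sq_nonneg _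
  constructor
  · linarith
  · intro heq
    have h0' : ∫ ω, (φ ω - g ω) ^ 2 ∂μ = 0 := by linarith
    have hint : Integrable (fun ω => (φ ω - g ω) ^ 2) μ := by
      have := (hφ2.sub hg2).integrable_sq
      simpa using this
    have := (integral_eq_zero_iff_of_nonneg (fun ω => sq_nonneg _) hint).mp h0'
    filter_upwards [this] with ω hω
    have : (φ ω - g ω) ^ 2 = 0 := hω
    have h2 : φ ω - g ω = 0 := by
      have := sq_eq_zero_iff.mp this
      exact this
    have : φ ω = g ω := by linarith
    exact this

end Aux

section Aux2
variable {Ω : Type*} [MeasurableSpace Ω] {μ : Measure Ω} [IsProbabilityMeasure μ]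

lemma exists_event {E : Type*} [MeasurableSpace E] {X : Ω → E} (hX : Measurable X)
    {φ : Ω → ℝ} (hφm : Measurable φ) (h01 : ∀ ω, φ ω = 0 ∨ φ ω = 1)
    (hvar : variance φ μ = 0 ∨
      variance (μ[φ | MeasurableSpace.comap X inferInstance]) μ = variance φ μ) :
    ∃ B : Set E, MeasurableSet B ∧ ∀ᵐ ω ∂μ, (φ ω = 1 ↔ X ω ∈ B) := by
  have h0 : ∀ ω, 0 ≤ φ ω := fun ω => by rcases h01 ω with h | h <;> rw [h] <;> norm_num
  have h1 : ∀ ω, φ ω ≤ 1 := fun ω => by rcases h01 ω with h | h <;> rw [h] <;> norm_num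
  have hφb : ∀ᵐ ω ∂μ, ‖φ ω‖ ≤ 1 := ae_of_all _ fun ω => by
    rw [Real.norm_eq_abs, abs_le]; exact ⟨by linarith [h0 ω], h1 ω⟩
  have hφ2 : MemLp φ 2 μ := MemLp.of_bound hφm.aestronglyMeasurable 1 hφb
  rcases hvar with hv0 | hveq
  · -- variance zero: φ is a.s. constant
    have hev : evariance φ μ = 0 := by
      have hlt := hφ2.evariance_lt_top
      rw [variance] at hv0
      exact (ENNReal.toReal_eq_zero_iff _).mp hv0 |>.resolve_right hlt.ne
    have hconst : φ =ᵐ[μ] fun _ => ∫ ω, φ ω ∂μ :=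
      (evariance_eq_zero_iff hφm.aemeasurable).mp hev
    by_cases hc : (1:ℝ)/2 < ∫ ω, φ ω ∂μ
    · refine ⟨Set.univ, MeasurableSet.univ, ?_⟩
      filter_upwards [hconst] with ω hω
      simp only [Set.mem_univ, iff_true]
      rcases h01 ω with h | h
      · rw [h] at hω; rw [← hω] at hc; norm_num at hc
      · exact h
    · refine ⟨∅, MeasurableSet.empty, ?_⟩
      filter_upwards [hconst] with ω hω
      simp only [Set.mem_empty_iff_false, iff_false]
      intro h1'
      rw [h1'] at hω; rw [← hω] at hc; norm_num at hc
  · -- variance equality: φ =ᵐ condexp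
    set m := MeasurableSpace.comap X inferInstance with hmdef
    have hm : m ≤ _ := hX.comap_le
    have hae : φ =ᵐ[μ] μ[φ|m] := (var_condexp_le hm hφm h0 h1).2 hveq
    have hs : MeasurableSet[m] ((μ[φ|m]) ⁻¹' Set.Ioi (1/2 : ℝ)) :=
      stronglyMeasurable_condExp.measurable measurableSet_Ioi
    rw [hmdef, MeasurableSpace.measurableSet_comap] at hs
    obtain ⟨B, hB, hBeq⟩ := hs
    refine ⟨B, hB, ?_⟩
    filter_upwards [hae] with ω hω
    constructor
    · intro h1'
      have : ω ∈ (μ[φ|m]) ⁻¹' Set.Ioi (1/2 : ℝ) := by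
        simp only [Set.mem_preimage, Set.mem_Ioi, ← hω, h1']; norm_num
      rw [← hBeq] at this
      exact this
    · intro hBx
      have : ω ∈ (μ[φ|m]) ⁻¹' Set.Ioi (1/2 : ℝ) := by rw [← hBeq]; exact hBx
      simp only [Set.mem_preimage, Set.mem_Ioi, ← hω] at this
      rcases h01 ω with h | h
      · rw [h] at this; norm_num at this
      · exact h

end Aux2

section RealMeasure
open Set

lemma measure_compl_msupport (ρ : Measure ℝ) : ρ (msupport ρ)ᶜ = 0 := by
  have hsub : (msupport ρ)ᶜ ⊆ ⋃ p ∈ {p : ℚ × ℚ | ρ (Set.Ioo (p.1 : ℝ) p.2) = 0},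
      Set.Ioo (p.1 : ℝ) (p.2 : ℝ) := by
    intro x hx
    simp only [msupport, Set.mem_compl_iff, Set.mem_setOf_eq, not_forall] at hx
    obtain ⟨ε, hε, hρ⟩ := hx
    rw [not_ne_iff] at hρ
    obtain ⟨q, hq1, hq2⟩ := exists_rat_btwn (show x - ε < x by linarith)
    obtain ⟨r, hr1, hr2⟩ := exists_rat_btwn (show x < x + ε by linarith)
    refine Set.mem_biUnion (show ((q, r) : ℚ × ℚ) ∈ _ from ?_) ⟨hq2, hr1⟩
    simp only [Set.mem_setOf_eq]
    refine measure_mono_null (fun z hz => ?_) hρ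
    rw [Set.mem_Ioo] at hz ⊢
    exact ⟨lt_trans hq1 hz.1, lt_trans hz.2 hr2⟩
  refine measure_mono_null hsub ?_
  rw [measure_biUnion_null_iff (Set.to_countable _)]
  exact fun p hp => hp

lemma isClosed_msupport (ρ : Measure ℝ) : IsClosed (msupport ρ) := by
  rw [← isOpen_compl_iff, Metric.isOpen_iff]
  intro x hx
  simp only [msupport, Set.mem_compl_iff, Set.mem_setOf_eq, not_forall] at hx
  obtain ⟨ε, hε, hρ⟩ := hx
  rw [not_ne_iff] at hρ
  refine ⟨ε / 2, by linarith, fun y hy => ?_⟩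
  simp only [Metric.mem_ball, Real.dist_eq] at hy
  simp only [msupport, Set.mem_compl_iff, Set.mem_setOf_eq, not_forall]
  refine ⟨ε / 2, by linarith, ?_⟩
  rw [not_ne_iff]
  refine measure_mono_null (fun z hz => ?_) hρ
  have := abs_lt.mp hy
  exact ⟨by simp only [Set.mem_Ioo] at hz ⊢; linarith [hz.1], by
    simp only [Set.mem_Ioo] at hz ⊢; linarith [hz.2]⟩

lemma gapset_null (ρ : Measure ℝ) :
    ρ {y : ℝ | ρ {y} = 0 ∧ ∃ ε > (0:ℝ), ρ (Set.Ioc y (y + ε)) = 0} = 0 := by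
  set G := {y : ℝ | ρ {y} = 0 ∧ ∃ ε > (0:ℝ), ρ (Set.Ioc y (y + ε)) = 0} with hG
  have key : ∀ q : ℚ, ρ {y : ℝ | y < q ∧ ρ (Set.Ico y (q : ℝ)) = 0} = 0 := by
    intro q
    set Eq' := {y : ℝ | y < q ∧ ρ (Set.Ico y (q : ℝ)) = 0} with hEq'
    have hsub : Eq' ⊆ (⋃ y : Eq', Set.Ioo (y : ℝ) q) ∪ {y | y ∈ Eq' ∧ ∀ z ∈ Eq', y ≤ z} := by
      intro y hy
      by_cases hex : ∃ z ∈ Eq', z < y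
      · obtain ⟨z, hz, hzy⟩ := hex
        exact Or.inl (Set.mem_iUnion.mpr ⟨⟨z, hz⟩, hzy, hy.1⟩)
      · push_neg at hex
        exact Or.inr ⟨hy, fun z hz => hex z hz⟩
    refine measure_mono_null hsub (measure_union_null ?_ ?_)
    · obtain ⟨T, hTc, hTu⟩ := TopologicalSpace.isOpen_iUnion_countable
        (fun y : Eq' => Set.Ioo (y : ℝ) q) (fun y => isOpen_Ioo)
      rw [← hTu, measure_biUnion_null_iff hTc]
      intro i _
      exact measure_mono_null Set.Ioo_subset_Ico_self i.2.2
    · have hsing : {y | y ∈ Eq' ∧ ∀ z ∈ Eq', y ≤ z}.Subsingleton := by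
        intro a ha b hb
        exact le_antisymm (ha.2 b hb.1) (hb.2 a ha.1)
      rcases hsing.eq_empty_or_singleton with h | ⟨a, h⟩
      · rw [h]; exact measure_empty
      · rw [h]
        have ha : a ∈ Eq' := by
          have : a ∈ ({a} : Set ℝ) := rfl
          rw [← h] at this; exact this.1
        refine measure_mono_null (fun z hz => ?_) ha.2
        rw [Set.mem_singleton_iff] at hz
        subst hz
        exact Set.mem_Ico.mpr ⟨le_refl _, ha.1⟩
  have hsub : G ⊆ ⋃ q : ℚ, {y : ℝ | y < q ∧ ρ (Set.Ico y (q : ℝ)) = 0} := by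
    intro y hy
    obtain ⟨hy0, ε, hε, hgap⟩ := hy
    obtain ⟨q, hq1, hq2⟩ := exists_rat_btwn (show y < y + ε by linarith)
    refine Set.mem_iUnion.mpr ⟨q, hq1, ?_⟩
    have : Set.Ico y (q : ℝ) ⊆ {y} ∪ Set.Ioc y (y + ε) := by
      intro z hz
      rcases eq_or_lt_of_le hz.1 with h | h
      · exact Or.inl (by rw [← h]; rfl)
      · exact Or.inr ⟨h, le_trans (le_of_lt hz.2) (le_of_lt hq2)⟩
    exact measure_mono_null this (measure_union_null hy0 hgap)
  refine measure_mono_null hsub ?_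
  rw [measure_iUnion_null_iff]
  exact fun q => key q

lemma countable_atoms (ρ : Measure ℝ) [IsFiniteMeasure ρ] :
    {y : ℝ | ρ {y} ≠ 0}.Countable := by
  have h : ∑' y : ℝ, ρ {y} ≠ ⊤ := by
    refine ne_top_of_le_ne_top (measure_ne_top ρ Set.univ) ?_
    refine tsum_measure_le_measure_univ (fun y => (measurableSet_singleton y).nullMeasurableSet) ?_
    intro i j hij
    exact Disjoint.aedisjoint (by simpa [Set.disjoint_singleton_left] using hij)
  have := Summable.countable_support_ennreal h
  simpa [Function.support] using this

end RealMeasure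

section Construction

lemma construction (ρ : Measure ℝ) [IsProbabilityMeasure ρ] {S A : Set ℝ} {mval : ℝ}
    (hAS : A ⊆ S) (hSsub : S ⊆ msupport ρ)
    (H1 : ∀ y ∈ msupport ρ, y ∈ S ∨ (y = mval ∧ ∀ s ∈ S, s < y))
    (H2 : ∀ y ∈ S, (∀ δ > (0:ℝ), ρ (Set.Ioc y (y + δ)) ≠ 0) →
        ∀ ε > (0:ℝ), ∃ δ > (0:ℝ), δ ≤ ε ∧ ρ (Set.Ioc y (y + δ) ∩ S) ≠ 0)
    (hAc : ρ (S \ A) = 0) (hatoms : ∀ y ∈ S, ρ {y} ≠ 0 → y ∈ A) (hAne : A.Nonempty) :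
    ∃ t : ℕ → ℝ, (∀ n, t n ∈ A) ∧ ∀ y ∈ msupport ρ,
      ¬(ρ {y} = 0 ∧ ∃ ε > (0:ℝ), ρ (Set.Ioc y (y + ε)) = 0) →
      ((⨅ n, (if t n < y then (⊤:EReal) else ((t n : ℝ) : EReal))) = ⊤ ∧ y = mval) ∨
      (⨅ n, (if t n < y then (⊤:EReal) else ((t n : ℝ) : EReal))) = (y : EReal) := by
  obtain ⟨T₀, hT₀A, hT₀c, hT₀d⟩ :=
    (TopologicalSpace.IsSeparable.of_separableSpace A).exists_countable_dense_subset
  set At := {y : ℝ | ρ {y} ≠ 0} ∩ A with hAt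
  have hAtc : At.Countable := (countable_atoms ρ).mono Set.inter_subset_left
  set T := T₀ ∪ At with hT
  have hTc : T.Countable := hT₀c.union hAtc
  have hTA : T ⊆ A := Set.union_subset hT₀A Set.inter_subset_right
  have hT₀ne : T₀.Nonempty := by
    obtain ⟨a, ha⟩ := hAne
    have := hT₀d ha
    obtain ⟨b, hb, -⟩ := Metric.mem_closure_iff.mp this 1 one_pos
    exact ⟨b, hb⟩
  have hTne : T.Nonempty := hT₀ne.mono Set.subset_union_left
  obtain ⟨t, ht⟩ := Set.Countable.exists_eq_range hTc hTne
  have htT : ∀ n, t n ∈ T := fun n => ht ▸ Set.mem_range_self n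
  have htA : ∀ n, t n ∈ A := fun n => hTA (htT n)
  refine ⟨t, htA, ?_⟩
  intro y hy hgood
  rcases H1 y hy with hyS | ⟨hym, hlt⟩
  · -- y in S : show iInf = y
    right
    have hlow : (y : EReal) ≤ ⨅ n, (if t n < y then (⊤:EReal) else ((t n : ℝ) : EReal)) := by
      refine le_iInf fun n => ?_
      by_cases h : t n < y
      · simp [h]
      · simp only [h, if_false]
        exact EReal.coe_le_coe_iff.mpr (not_lt.mp h)
    by_cases hatom : ρ {y} ≠ 0
    · -- y is an atom, hence in T
      have hyA : y ∈ A := hatoms y hyS hatom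
      have hyT : y ∈ T := Set.mem_union_right _ ⟨hatom, hyA⟩
      rw [ht] at hyT
      obtain ⟨n, hn⟩ := hyT
      refine le_antisymm ?_ hlow
      refine le_trans (iInf_le _ n) ?_
      rw [hn, if_neg (lt_irrefl y)]
    · -- no atom at y; approximate from above
      rw [not_ne_iff] at hatom
      have hδ : ∀ δ > (0:ℝ), ρ (Set.Ioc y (y + δ)) ≠ 0 := by
        intro δ hδ0
        intro hc
        exact hgood ⟨hatom, δ, hδ0, hc⟩
      have hstep : ∀ ε > (0:ℝ), ∃ n, y ≤ t n ∧ t n ≤ y + ε := by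
        intro ε hε
        obtain ⟨δ, hδ0, hδε, hρδ⟩ := H2 y hyS hδ (ε/2) (half_pos hε)
        have hWA : (Set.Ioc y (y + δ) ∩ S ∩ A).Nonempty := by
          rw [Set.nonempty_iff_ne_empty]
          intro hemp
          refine hρδ (measure_mono_null (fun z hz => ?_) hAc)
          refine ⟨hz.2, fun hzA => ?_⟩
          exact Set.eq_empty_iff_forall_notMem.mp hemp z ⟨hz, hzA⟩
        obtain ⟨a, ⟨haI, haS⟩, haA⟩ := hWA
        have hay : y < a := haI.1
        obtain ⟨b, hb, hab⟩ := Metric.mem_closure_iff.mp (hT₀d haA)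
          (min (a - y) (ε/2)) (lt_min (by linarith) (half_pos hε))
        have hbT : b ∈ T := Set.mem_union_left _ hb
        rw [ht] at hbT
        obtain ⟨n, hn⟩ := hbT
        refine ⟨n, ?_, ?_⟩
        · rw [hn]
          have h1' : dist a b < a - y := lt_of_lt_of_le hab (min_le_left _ _)
          have := abs_lt.mp (by rwa [Real.dist_eq] at h1')
          linarith [this.1]
        · rw [hn]
          have h2' : dist a b < ε/2 := lt_of_lt_of_le hab (min_le_right _ _)
          have := abs_lt.mp (by rwa [Real.dist_eq] at h2')
          have haub : a ≤ y + δ := haI.2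
          linarith [this.1, this.2]
      set F := ⨅ n, (if t n < y then (⊤:EReal) else ((t n : ℝ) : EReal)) with hF
      have hup : ∀ ε > (0:ℝ), F ≤ ((y + ε : ℝ) : EReal) := by
        intro ε hε
        obtain ⟨n, hn1, hn2⟩ := hstep ε hε
        refine le_trans (iInf_le _ n) ?_
        rw [if_neg (not_lt.mpr hn1)]
        exact EReal.coe_le_coe_iff.mpr hn2
      have hFtop : F ≠ ⊤ := by
        intro h
        have := hup 1 one_pos
        rw [h] at this
        exact absurd (top_le_iff.mp this) (EReal.coe_ne_top _)
      have hFbot : F ≠ ⊥ := by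
        intro h
        rw [h] at hlow
        exact absurd (le_bot_iff.mp hlow) (EReal.coe_ne_bot _)
      have hFcoe : ((F.toReal : ℝ) : EReal) = F := EReal.coe_toReal hFtop hFbot
      have hle : F.toReal ≤ y := by
        by_contra hgt
        push_neg at hgt
        have hε : (0:ℝ) < (F.toReal - y)/2 := by linarith
        have := hup _ hε
        rw [← hFcoe] at this
        have h2 := EReal.coe_le_coe_iff.mp this
        simp only [EReal.toReal_coe] at h2
        linarith
      refine le_antisymm ?_ hlow
      rw [← hFcoe]
      exact EReal.coe_le_coe_iff.mpr hle
  · -- y = mval, greatest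
    left
    refine ⟨?_, hym⟩
    rw [iInf_eq_top]
    intro n
    rw [if_pos (hlt _ (hAS (htA n)))]

end Construction

section MainAux

lemma measurableSet_tildeSet (ρ : Measure ℝ) : MeasurableSet (tildeSet ρ) := by
  rw [tildeSet]
  split
  · exact (isClosed_msupport ρ).measurableSet.diff (measurableSet_singleton _)
  · exact (isClosed_msupport ρ).measurableSet

end MainAux

end

/-- If `Y` is nondegenerate and `ν(Y,X) = 1`, then `Y` is a.s. a measurable function
of `X`. -/
theorem stmt_6 {Ω : Type*} [MeasurableSpace Ω] (μ : Measure Ω) [IsProbabilityMeasure μ]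
    {p : ℕ} (Y : Ω → ℝ) (X : Ω → EuclideanSpace ℝ (Fin p))
    (hY : Measurable Y) (hX : Measurable X)
    (hconst : ¬ ∃ c : ℝ, ∀ᵐ ω ∂μ, Y ω = c)
    (hnu : nu μ Y X = 1) :
    ∃ f : EuclideanSpace ℝ (Fin p) → ℝ, Measurable f ∧ Y =ᵐ[μ] fun ω => f (X ω) := by
  classical
  set ρ : Measure ℝ := Measure.map Y μ with hρdef
  have hρprob : IsProbabilityMeasure ρ := Measure.isProbabilityMeasure_map hY.aemeasurable
  set S : Set ℝ := tildeSet ρ with hSdef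
  have hSm : MeasurableSet S := measurableSet_tildeSet ρ
  set r : ℝ → ℝ := fun t =>
    if variance (indGT Y t) μ = 0 then 1
    else variance (μ[indGT Y t | MeasurableSpace.comap X inferInstance]) μ
          / variance (indGT Y t) μ with hrdef
  have hnu' : ∫ t, r t ∂ (tildeMeasure ρ) = 1 := by rw [← hnu]; rfl
  -- basic facts about the indicator
  have hφm : ∀ t, Measurable (indGT Y t) := fun t =>
    Measurable.ite (measurableSet_lt measurable_const hY) measurable_const measurable_const
  have hφ0 : ∀ t ω, 0 ≤ indGT Y t ω := fun t ω => by
    rw [indGT]; split <;> norm_num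
  have hφ1 : ∀ t ω, indGT Y t ω ≤ 1 := fun t ω => by
    rw [indGT]; split <;> norm_num
  have hφ01 : ∀ t ω, indGT Y t ω = 0 ∨ indGT Y t ω = 1 := fun t ω => by
    rw [indGT]; split
    · exact Or.inr rfl
    · exact Or.inl rfl
  have hφiff : ∀ t ω, (indGT Y t ω = 1 ↔ Y ω > t) := fun t ω => by
    rw [indGT]
    split <;> rename_i h
    · simp [h]
    · simp [h]
  -- bounds on r
  have hr01 : ∀ t, 0 ≤ r t ∧ r t ≤ 1 := by
    intro t
    rw [hrdef]
    by_cases hv : variance (indGT Y t) μ = 0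
    · simp [hv]
    · simp only [hv, if_false]
      have hvpos : 0 < variance (indGT Y t) μ :=
        lt_of_le_of_ne (variance_nonneg _ _) (Ne.symm hv)
      have hle := (var_condexp_le (μ := μ) hX.comap_le (hφm t) (hφ0 t) (hφ1 t)).1
      constructor
      · exact div_nonneg (variance_nonneg _ _) hvpos.le
      · exact div_le_one_of_le₀ hle hvpos.le
  -- tildeMeasure is a probability measure
  have hc0 : ρ S ≠ 0 := by
    intro h
    have hz : tildeMeasure ρ = 0 := by
      rw [tildeMeasure, Measure.restrict_eq_zero.mpr h, smul_zero]
    rw [hz] at hnu'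
    simp at hnu'
  have hcne : ρ S ≠ ⊤ := (lt_of_le_of_lt prob_le_one ENNReal.one_lt_top).ne
  have htilde_prob : IsProbabilityMeasure (tildeMeasure ρ) := by
    constructor
    rw [tildeMeasure, Measure.smul_apply, Measure.restrict_apply_univ, smul_eq_mul]
    exact ENNReal.inv_mul_cancel hc0 hcne
  -- r is a.e. 1
  have hInt : Integrable r (tildeMeasure ρ) := by
    by_contra h
    rw [integral_undef h] at hnu'
    norm_num at hnu'
  have hae1 : ∀ᵐ t ∂(tildeMeasure ρ), r t = 1 := by
    have hsub : ∫ t, (1 - r t) ∂(tildeMeasure ρ) = 0 := by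
      rw [integral_sub (integrable_const 1) hInt, hnu']
      simp
    have hnn : 0 ≤ᵐ[tildeMeasure ρ] fun t => 1 - r t :=
      Filter.Eventually.of_forall fun t => by
        simp only [Pi.zero_apply]; linarith [(hr01 t).2]
    have := (integral_eq_zero_iff_of_nonneg_ae hnn ((integrable_const 1).sub hInt)).mp hsub
    filter_upwards [this] with t ht
    have : (1:ℝ) - r t = 0 := ht
    linarith
  -- the key property P holds a.e.
  set P : ℝ → Prop := fun t => ∃ B : Set (EuclideanSpace ℝ (Fin p)), MeasurableSet B ∧
      ∀ᵐ ω ∂μ, (Y ω > t ↔ X ω ∈ B) with hPdef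
  have hP : ∀ᵐ t ∂(tildeMeasure ρ), P t := by
    filter_upwards [hae1] with t ht
    have hvar : variance (indGT Y t) μ = 0 ∨
        variance (μ[indGT Y t | MeasurableSpace.comap X inferInstance]) μ
          = variance (indGT Y t) μ := by
      by_cases hv : variance (indGT Y t) μ = 0
      · exact Or.inl hv
      · refine Or.inr ?_
        rw [hrdef] at ht
        simp only [hv, if_false] at ht
        exact (div_eq_one_iff_eq hv).mp ht
    obtain ⟨B, hB, hBae⟩ := exists_event hX (hφm t) (fun ω => hφ01 t ω) hvar
    refine ⟨B, hB, ?_⟩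
    filter_upwards [hBae] with ω hω
    rw [← hφiff t ω]
    exact hω
  -- transfer nullity to ρ
  have hNP : ρ ({t | ¬ P t} ∩ S) = 0 := by
    have h1 : tildeMeasure ρ {t | ¬ P t} = 0 := hP
    rw [tildeMeasure, Measure.smul_apply, smul_eq_mul] at h1
    rcases mul_eq_zero.mp h1 with h | h
    · exact absurd h (ENNReal.inv_ne_zero.mpr hcne)
    · rwa [Measure.restrict_apply' hSm] at h
  set A : Set ℝ := {t | P t} ∩ S with hAdef
  have hAS : A ⊆ S := Set.inter_subset_right
  have hAc : ρ (S \ A) = 0 := by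
    refine measure_mono_null (fun y hy => ?_) hNP
    refine ⟨fun hPy => hy.2 ⟨hPy, hy.1⟩, hy.1⟩
  have hatoms : ∀ y ∈ S, ρ {y} ≠ 0 → y ∈ A := by
    intro y hyS hatom
    by_contra hyA
    refine hatom (measure_mono_null (fun z hz => ?_) hNP)
    rw [Set.mem_singleton_iff] at hz
    subst hz
    exact ⟨fun hPy => hyA ⟨hPy, hyS⟩, hyS⟩
  have hAne : A.Nonempty := by
    rw [Set.nonempty_iff_ne_empty]
    intro h
    refine hc0 (measure_mono_null (fun z hz => ?_) hAc)
    exact ⟨hz, by rw [h]; exact Set.notMem_empty z⟩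
  -- case analysis on the existence of a maximum of the support
  have key : ∃ mval : ℝ, S ⊆ msupport ρ ∧
      (∀ y ∈ msupport ρ, y ∈ S ∨ (y = mval ∧ ∀ s ∈ S, s < y)) ∧
      (∀ y ∈ S, (∀ δ > (0:ℝ), ρ (Set.Ioc y (y + δ)) ≠ 0) →
        ∀ ε > (0:ℝ), ∃ δ > (0:ℝ), δ ≤ ε ∧ ρ (Set.Ioc y (y + δ) ∩ S) ≠ 0) := by
    by_cases hmax : ∃ m', IsGreatest (msupport ρ) m'
    · have hmis : IsGreatest (msupport ρ) hmax.choose := hmax.choose_spec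
      have hSeq : S = msupport ρ \ {hmax.choose} := by
        rw [hSdef, tildeSet, dif_pos hmax]
      refine ⟨hmax.choose, ?_, ?_, ?_⟩
      · rw [hSeq]; exact Set.diff_subset
      · intro y hy
        by_cases hy' : y = hmax.choose
        · refine Or.inr ⟨hy', fun s hs => ?_⟩
          rw [hSeq] at hs
          rw [hy']
          exact lt_of_le_of_ne (hmis.2 hs.1) (by simpa using hs.2)
        · refine Or.inl ?_
          rw [hSeq]; exact ⟨hy, hy'⟩
      · intro y hyS hno ε hε
        have hyS' := hyS
        rw [hSeq] at hyS'
        have hym : y < hmax.choose :=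
          lt_of_le_of_ne (hmis.2 hyS'.1) (by simpa using hyS'.2)
        refine ⟨min ε ((hmax.choose - y)/2), lt_min hε (by linarith), min_le_left _ _, ?_⟩
        intro h0
        refine hno (min ε ((hmax.choose - y)/2)) (lt_min hε (by linarith)) ?_
        have hIsub : Set.Ioc y (y + min ε ((hmax.choose - y)/2)) ⊆
            (Set.Ioc y (y + min ε ((hmax.choose - y)/2)) ∩ S) ∪ (msupport ρ)ᶜ := by
          intro z hz
          by_cases hzs : z ∈ msupport ρ
          · refine Or.inl ⟨hz, ?_⟩
            rw [hSeq]
            refine ⟨hzs, ?_⟩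
            simp only [Set.mem_singleton_iff]
            intro hzm
            have hz2 := hz.2
            have hmin : min ε ((hmax.choose - y)/2) ≤ (hmax.choose - y)/2 :=
              min_le_right _ _
            rw [hzm] at hz2
            linarith
          · exact Or.inr hzs
        exact measure_mono_null hIsub (measure_union_null h0 (measure_compl_msupport ρ))
    · have hSeq : S = msupport ρ := by rw [hSdef, tildeSet, dif_neg hmax]
      refine ⟨0, hSeq.subset, fun y hy => Or.inl (by rw [hSeq]; exact hy), ?_⟩
      intro y hyS hno ε hε
      refine ⟨ε, hε, le_refl _, ?_⟩
      intro h0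
      refine hno ε hε ?_
      have hIsub : Set.Ioc y (y + ε) ⊆ (Set.Ioc y (y + ε) ∩ S) ∪ (msupport ρ)ᶜ := by
        intro z hz
        by_cases hzs : z ∈ msupport ρ
        · exact Or.inl ⟨hz, by rw [hSeq]; exact hzs⟩
        · exact Or.inr hzs
      exact measure_mono_null hIsub (measure_union_null h0 (measure_compl_msupport ρ))
  obtain ⟨mval, hSsub, H1, H2⟩ := key
  obtain ⟨t, htA, hspec⟩ := construction ρ hAS hSsub H1 H2 hAc hatoms hAne
  have hPt : ∀ n, P (t n) := fun n => (htA n).1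
  choose B hBm hBae using fun n => hPt n
  -- define the function f
  set f' : EuclideanSpace ℝ (Fin p) → EReal := fun x => ⨅ n, (if x ∈ B n then (⊤:EReal) else ((t n : ℝ) : EReal))
    with hf'def
  have hf'meas : Measurable f' :=
    Measurable.iInf fun n => Measurable.ite (hBm n) measurable_const measurable_const
  set f : EuclideanSpace ℝ (Fin p) → ℝ := fun x => if f' x = ⊤ then mval else (f' x).toReal with hfdef
  have hfmeas : Measurable f := by
    refine Measurable.ite (hf'meas (measurableSet_singleton ⊤)) measurable_const ?_
    exact hf'meas.ereal_toReal
  refine ⟨f, hfmeas, ?_⟩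
  -- the a.e. null sets
  have hae_supp : ∀ᵐ ω ∂μ, Y ω ∈ msupport ρ := by
    have hms : MeasurableSet (msupport ρ)ᶜ := (isClosed_msupport ρ).measurableSet.compl
    have : μ (Y ⁻¹' (msupport ρ)ᶜ) = 0 := by
      rw [← Measure.map_apply hY hms]
      exact measure_compl_msupport ρ
    exact this
  have hae_gap : ∀ᵐ ω ∂μ, ¬(ρ {Y ω} = 0 ∧ ∃ ε > (0:ℝ), ρ (Set.Ioc (Y ω) (Y ω + ε)) = 0) := by
    set G := {y : ℝ | ρ {y} = 0 ∧ ∃ ε > (0:ℝ), ρ (Set.Ioc y (y + ε)) = 0} with hGdef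
    have hG : ρ G = 0 := gapset_null ρ
    have hG' : ρ (toMeasurable ρ G) = 0 := by rwa [measure_toMeasurable]
    have : μ (Y ⁻¹' toMeasurable ρ G) = 0 := by
      rw [← Measure.map_apply hY (measurableSet_toMeasurable ρ G)]
      exact hG'
    have hsub : {ω | ¬ ¬(ρ {Y ω} = 0 ∧ ∃ ε > (0:ℝ), ρ (Set.Ioc (Y ω) (Y ω + ε)) = 0)}
        ⊆ Y ⁻¹' toMeasurable ρ G := by
      intro ω hω
      rw [Set.mem_setOf_eq, not_not] at hω
      exact subset_toMeasurable ρ G hω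
    exact measure_mono_null hsub this
  have hae_iff : ∀ᵐ ω ∂μ, ∀ n, (Y ω > t n ↔ X ω ∈ B n) := ae_all_iff.mpr hBae
  filter_upwards [hae_supp, hae_gap, hae_iff] with ω h1 h2 h3
  -- pointwise conclusion
  have hcong : f' (X ω) = ⨅ n, (if t n < Y ω then (⊤:EReal) else ((t n : ℝ) : EReal)) := by
    refine iInf_congr fun n => ?_
    exact if_congr ((h3 n).symm) rfl rfl
  rcases hspec (Y ω) h1 h2 with ⟨htop, hym⟩ | heq
  · have : f' (X ω) = ⊤ := hcong.trans htop
    show Y ω = f (X ω)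
    rw [hfdef]
    simp only [this, if_pos]
    exact hym
  · have hfx : f' (X ω) = ((Y ω : ℝ) : EReal) := hcong.trans heq
    show Y ω = f (X ω)
    rw [hfdef]
    simp only [hfx, EReal.coe_ne_top, if_false, EReal.toReal_coe]
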